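/- Let D be a real m×m diagonal matrix with strictly positive diagonal entries, C a real m×q matrix, z₀ ∈ ℝᵐ, H = D⁻¹C, z(λ) = z₀ + Hλ, and g(λ) = Cᵀ·arcsin(z(λ)). Let λ̲ ≤ λ̄ componentwise in ℝ^q and Λ = {λ : λ̲ ≤ λ ≤ λ̄}. Assume: (1) |z_e(λ)| ≤ 1 for every e ∈ {1,…,m} and every λ ∈ Λ; (2) for all λ, μ ∈ Λ with λ ≤ μ componentwise, g(λ) ≤ g(μ) componentwise; (3) for every i ∈ {1,…,q}, g_i evaluated at the point whose i-th coordinate is λ̲_i and whose j-th coordinate is λ̄_j for all j ≠ i is ≤ 0, and g_i evaluated at the point whose i-th coordinate is λ̄_i and whose j-th coordinate is λ̲_j for all j ≠ i is ≥ 0. Then there exists λ* ∈ Λ such that g(λ*) = 0. -/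

import Mathlib

open Matrix Real

noncomputable def Fphi (x : ℝ) : ℝ := x * Real.arcsin x + Real.sqrt (1 - x^2)

lemma Fphi_cont : Continuous Fphi := by
  unfold Fphi
  exact (continuous_id.mul Real.continuous_arcsin).add
    ((continuous_const.sub (continuous_pow 2)).sqrt)

lemma Fphi_deriv {x : ℝ} (h1 : -1 < x) (h2 : x < 1) :
    HasDerivAt Fphi (Real.arcsin x) x := by
  have hs : (0:ℝ) < 1 - x^2 := by nlinarith
  have hsq : Real.sqrt (1 - x^2) ≠ 0 := by positivity
  have ha : HasDerivAt (fun y : ℝ => y * Real.arcsin y)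
      (1 * Real.arcsin x + x * (1 / Real.sqrt (1 - x^2))) x :=
    (hasDerivAt_id x).mul (Real.hasDerivAt_arcsin (by linarith) (by linarith))
  have hin : HasDerivAt (fun y : ℝ => 1 - y^2) (-(2 * x)) x := by
    simpa using (hasDerivAt_pow 2 x).const_sub 1
  have hb : HasDerivAt (fun y : ℝ => Real.sqrt (1 - y^2))
      (-(2*x) / (2 * Real.sqrt (1 - x^2))) x := hin.sqrt (ne_of_gt hs)
  have := ha.add hb
  refine HasDerivAt.congr_deriv (f := Fphi) this ?_
  field_simp
  ring

lemma grad_ineq {a b : ℝ} (ha1 : -1 ≤ a) (ha2 : a ≤ 1) (hb1 : -1 ≤ b) (hb2 : b ≤ 1) :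
    Real.arcsin a * (b - a) ≤ Fphi b - Fphi a := by
  have ftc : ∀ u v : ℝ, -1 ≤ u → v ≤ 1 → u ≤ v →
      Fphi v - Fphi u = ∫ t in u..v, Real.arcsin t := by
    intro u v hu hv huv
    symm
    apply intervalIntegral.integral_eq_sub_of_hasDerivAt_of_le huv
      (Fphi_cont.continuousOn) (fun x hx => ?_)
      (Real.continuous_arcsin.intervalIntegrable u v)
    exact Fphi_deriv (by linarith [hx.1]) (by linarith [hx.2])
  rcases le_total a b with hab | hab
  · rw [ftc a b ha1 hb2 hab]
    calc Real.arcsin a * (b - a) = ∫ _ in a..b, Real.arcsin a := by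
          simp [mul_comm]
      _ ≤ ∫ t in a..b, Real.arcsin t := by
          apply intervalIntegral.integral_mono_on hab
            (intervalIntegrable_const) (Real.continuous_arcsin.intervalIntegrable a b)
          intro t ht
          exact Real.monotone_arcsin ht.1
  · have h : Fphi a - Fphi b ≤ Real.arcsin a * (a - b) := by
      rw [ftc b a hb1 ha2 hab]
      calc (∫ t in b..a, Real.arcsin t) ≤ ∫ _ in b..a, Real.arcsin a := by
            apply intervalIntegral.integral_mono_on hab
              (Real.continuous_arcsin.intervalIntegrable b a) (intervalIntegrable_const)
            intro t ht
            exact Real.monotone_arcsin ht.2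
        _ = Real.arcsin a * (a - b) := by simp [mul_comm]
    nlinarith

/-- Core conclusion in the proof of Theorem 1: under edge-wise
feasibility, coordinatewise monotonicity of the cycle consistency residual `g`,
and corner sign conditions, `g` has a zero in the box `Λ`. -/
theorem stmt6 {m q : ℕ}
    (d : Fin m → ℝ) (hd : ∀ e, 0 < d e)
    (D : Matrix (Fin m) (Fin m) ℝ) (hD : D = Matrix.diagonal d)
    (C : Matrix (Fin m) (Fin q) ℝ)
    (z0 : Fin m → ℝ)
    (H : Matrix (Fin m) (Fin q) ℝ) (hH : H = D⁻¹ * C)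
    (z : (Fin q → ℝ) → Fin m → ℝ) (hz : ∀ lam, z lam = z0 + H.mulVec lam)
    (g : (Fin q → ℝ) → Fin q → ℝ)
    (hg : ∀ lam, g lam = Cᵀ.mulVec (fun e => Real.arcsin (z lam e)))
    (lamL lamU : Fin q → ℝ) (hle : lamL ≤ lamU)
    (Lam : Set (Fin q → ℝ)) (hLam : Lam = {lam | lamL ≤ lam ∧ lam ≤ lamU})
    (h1 : ∀ lam ∈ Lam, ∀ e, |z lam e| ≤ 1)
    (h2 : ∀ lam ∈ Lam, ∀ mu ∈ Lam, lam ≤ mu → g lam ≤ g mu)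
    (h3 : ∀ i : Fin q,
      g (fun j => if j = i then lamL i else lamU j) i ≤ 0 ∧
      0 ≤ g (fun j => if j = i then lamU i else lamL j) i) :
    ∃ lamStar ∈ Lam, g lamStar = 0 := by
  -- basic facts
  have hC : ∀ e j, d e * H e j = C e j := by
    have hdet : IsUnit D.det := by
      rw [hD, Matrix.det_diagonal]
      exact (Finset.prod_pos (fun e _ => hd e)).ne'.isUnit
    have hDH : D * H = C := by
      rw [hH, ← Matrix.mul_assoc, Matrix.mul_nonsing_inv D hdet, Matrix.one_mul]
    intro e j
    have := congrFun (congrFun hDH e) j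
    rwa [hD, Matrix.diagonal_mul] at this
  have hzfun : ∀ lam e, z lam e = z0 e + ∑ j, H e j * lam j := by
    intro lam e
    rw [hz]
    simp [Matrix.mulVec, dotProduct]
  have hgfun : ∀ lam i, g lam i = ∑ e, C e i * Real.arcsin (z lam e) := by
    intro lam i
    rw [hg]
    simp [Matrix.mulVec, dotProduct, Matrix.transpose_apply]
  -- continuity of z and g components
  have hzcont : ∀ e, Continuous fun lam : Fin q → ℝ => z lam e := by
    intro e
    have : (fun lam : Fin q → ℝ => z lam e)
        = fun lam => z0 e + ∑ j, H e j * lam j := funext fun lam => hzfun lam e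
    rw [this]
    exact continuous_const.add
      (continuous_finset_sum _ fun j _ => continuous_const.mul (continuous_apply j))
  have hgcont : ∀ i, Continuous fun lam : Fin q → ℝ => g lam i := by
    intro i
    have : (fun lam : Fin q → ℝ => g lam i)
        = fun lam => ∑ e, C e i * Real.arcsin (z lam e) := funext fun lam => hgfun lam i
    rw [this]
    exact continuous_finset_sum _ fun e _ =>
      continuous_const.mul (Real.continuous_arcsin.comp (hzcont e))
  -- the potential function
  set Φ : (Fin q → ℝ) → ℝ := fun lam => ∑ e, d e * Fphi (z lam e) with hΦ
  have hΦcont : Continuous Φ :=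
    continuous_finset_sum _ fun e _ => continuous_const.mul (Fphi_cont.comp (hzcont e))
  -- gradient inequality
  have key : ∀ lam ∈ Lam, ∀ mu ∈ Lam,
      ∑ j, g lam j * (mu j - lam j) ≤ Φ mu - Φ lam := by
    intro lam hlam mu hmu
    have hsum : ∑ j, g lam j * (mu j - lam j)
        = ∑ e, d e * (Real.arcsin (z lam e) * (z mu e - z lam e)) := by
      have hz_diff : ∀ e, z mu e - z lam e = ∑ j, H e j * (mu j - lam j) := by
        intro e
        rw [hzfun, hzfun]
        simp only [mul_sub, Finset.sum_sub_distrib]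
        ring
      calc ∑ j, g lam j * (mu j - lam j)
          = ∑ j, ∑ e, (C e j * Real.arcsin (z lam e)) * (mu j - lam j) := by
            refine Finset.sum_congr rfl fun j _ => ?_
            rw [hgfun, Finset.sum_mul]
        _ = ∑ e, ∑ j, (C e j * Real.arcsin (z lam e)) * (mu j - lam j) :=
            Finset.sum_comm
        _ = ∑ e, d e * (Real.arcsin (z lam e) * (z mu e - z lam e)) := by
            refine Finset.sum_congr rfl fun e _ => ?_
            rw [hz_diff e, Finset.mul_sum, Finset.mul_sum]
            refine Finset.sum_congr rfl fun j _ => ?_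
            rw [← hC e j]; ring
    rw [hsum, hΦ]
    simp only []
    rw [← Finset.sum_sub_distrib]
    refine Finset.sum_le_sum fun e _ => ?_
    rw [← mul_sub]
    refine mul_le_mul_of_nonneg_left ?_ (hd e).le
    have hl := abs_le.mp (h1 lam hlam e)
    have hm := abs_le.mp (h1 mu hmu e)
    exact grad_ineq hl.1 hl.2 hm.1 hm.2
  -- compactness & minimizer
  have hIcc : Lam = Set.Icc lamL lamU := by rw [hLam]; rfl
  have hcomp : IsCompact Lam := by rw [hIcc]; exact isCompact_Icc
  have hne : Lam.Nonempty := ⟨lamL, by rw [hIcc]; exact ⟨le_refl _, hle⟩⟩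
  obtain ⟨lamStar, hmemS, hmin⟩ := hcomp.exists_isMinOn hne hΦcont.continuousOn
  have hmemS' : lamL ≤ lamStar ∧ lamStar ≤ lamU := by rwa [hLam] at hmemS
  refine ⟨lamStar, hmemS, ?_⟩
  -- face sign claims
  have claimA : ∀ lam ∈ Lam, ∀ i, lam i = lamL i → g lam i ≤ 0 := by
    intro lam hlam i hi
    set c : Fin q → ℝ := fun j => if j = i then lamL i else lamU j with hc
    have hlam' : lamL ≤ lam ∧ lam ≤ lamU := by rwa [hLam] at hlam
    have hcmem : c ∈ Lam := by
      rw [hLam]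
      constructor <;> intro j <;> by_cases hji : j = i <;>
        simp [hc, hji, hle i, hle j, le_refl]
    have hlec : lam ≤ c := by
      intro j
      by_cases hji : j = i
      · subst hji; simp [hc, hi]
      · simp [hc, hji]; exact hlam'.2 j
    exact le_trans (h2 lam hlam c hcmem hlec i) (h3 i).1
  have claimB : ∀ lam ∈ Lam, ∀ i, lam i = lamU i → 0 ≤ g lam i := by
    intro lam hlam i hi
    set c : Fin q → ℝ := fun j => if j = i then lamU i else lamL j with hc
    have hlam' : lamL ≤ lam ∧ lam ≤ lamU := by rwa [hLam] at hlam
    have hcmem : c ∈ Lam := by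
      rw [hLam]
      constructor <;> intro j <;> by_cases hji : j = i <;>
        simp [hc, hji, hle i, hle j, le_refl]
    have hlec : c ≤ lam := by
      intro j
      by_cases hji : j = i
      · subst hji; simp [hc, hi]
      · simp [hc, hji]; exact hlam'.1 j
    exact le_trans (h3 i).2 (h2 c hcmem lam hlam hlec i)
  -- coordinate perturbation
  funext i
  show g lamStar i = (0 : Fin q → ℝ) i
  rw [Pi.zero_apply]
  set μ : ℝ → (Fin q → ℝ) := fun t j => if j = i then t else lamStar j with hμ
  have hμself : μ (lamStar i) = lamStar := by
    funext j; by_cases hji : j = i <;> simp [hμ, hji]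
  have hμmem : ∀ t, lamL i ≤ t → t ≤ lamU i → μ t ∈ Lam := by
    intro t htl htu
    rw [hLam]
    constructor <;> intro j <;> by_cases hji : j = i <;>
      simp [hμ, hji, htl, htu, hmemS'.1 j, hmemS'.2 j]
  have hμcont : Continuous fun t : ℝ => g (μ t) i := by
    refine (hgcont i).comp (continuous_pi fun j => ?_)
    by_cases hji : j = i <;> simp [hμ, hji] <;>
      [exact continuous_id; exact continuous_const]
  have hsum_single : ∀ t, (∑ j, g (μ t) j * (lamStar j - μ t j))
      = g (μ t) i * (lamStar i - t) := by
    intro t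
    rw [Finset.sum_eq_single i]
    · simp [hμ]
    · intro j _ hji; simp [hμ, hji]
    · intro h; exact absurd (Finset.mem_univ i) h
  -- g lamStar i ≥ 0
  have hge : 0 ≤ g lamStar i := by
    rcases eq_or_lt_of_le (hmemS'.2 i) with heq | hlt
    · exact claimB lamStar hmemS i heq
    · have hev : ∀ t ∈ Set.Ioc (lamStar i) (lamU i), 0 ≤ g (μ t) i := by
        intro t ht
        have htmem : μ t ∈ Lam := hμmem t (le_trans (hmemS'.1 i) ht.1.le) ht.2
        have := key (μ t) htmem lamStar hmemS
        rw [hsum_single t] at this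
        have hmin' : Φ lamStar ≤ Φ (μ t) := hmin htmem
        nlinarith [ht.1]
      have htend : Filter.Tendsto (fun t => g (μ t) i) (nhdsWithin (lamStar i) (Set.Ioi (lamStar i)))
          (nhds (g lamStar i)) := by
        have h0 := (hμcont.tendsto (lamStar i)).mono_left
          (nhdsWithin_le_nhds (s := Set.Ioi (lamStar i)))
        rwa [hμself] at h0
      refine ge_of_tendsto htend ?_
      filter_upwards [Ioc_mem_nhdsGT hlt] using hev
  -- g lamStar i ≤ 0
  have hle' : g lamStar i ≤ 0 := by
    rcases eq_or_lt_of_le (hmemS'.1 i) with heq | hlt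
    · exact claimA lamStar hmemS i heq.symm
    · have hev : ∀ t ∈ Set.Ico (lamL i) (lamStar i), g (μ t) i ≤ 0 := by
        intro t ht
        have htmem : μ t ∈ Lam := hμmem t ht.1 (le_trans ht.2.le (hmemS'.2 i))
        have := key (μ t) htmem lamStar hmemS
        rw [hsum_single t] at this
        have hmin' : Φ lamStar ≤ Φ (μ t) := hmin htmem
        nlinarith [ht.2]
      have htend : Filter.Tendsto (fun t => g (μ t) i) (nhdsWithin (lamStar i) (Set.Iio (lamStar i)))
          (nhds (g lamStar i)) := by
        have h0 := (hμcont.tendsto (lamStar i)).mono_left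
          (nhdsWithin_le_nhds (s := Set.Iio (lamStar i)))
        rwa [hμself] at h0
      refine le_of_tendsto htend ?_
      filter_upwards [Ico_mem_nhdsLT hlt] using hev
  linarith
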